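/- arXiv:2603.21026 — 2 statements merged into one kernel-verified Lean document; each statement's English description precedes it below -/
import Mathlib

section
/- Let g ∈ ℂ^N and A, B > 0. The family {T_i g : 1 ≤ i ≤ N} is a frame for ℂ^N with frame bounds A and B if and only if √(A/N) ≤ |ĝ(l)| ≤ √(B/N) for all 1 ≤ l ≤ N. -/
open scoped ComplexConjugate BigOperators

/-- Graph Fourier transform: `(gft χ f) l = ⟨f, χ_l⟩ = ∑ n, f n * conj (χ l n)`. -/
noncomputable def gft {N : ℕ} (χ : Fin N → EuclideanSpace ℂ (Fin N))
    (f : EuclideanSpace ℂ (Fin N)) : EuclideanSpace ℂ (Fin N) :=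
  WithLp.toLp 2 (fun l => ∑ n, f n * conj (χ l n))

/-- Generalized translation: `(T_i f)(n) = √N · ∑ l, f̂(l) · conj (χ l i) · χ l n`. -/
noncomputable def gtrans {N : ℕ} (χ : Fin N → EuclideanSpace ℂ (Fin N))
    (i : Fin N) (f : EuclideanSpace ℂ (Fin N)) : EuclideanSpace ℂ (Fin N) :=
  WithLp.toLp 2 (fun n => (Real.sqrt N : ℂ) * ∑ l, gft χ f l * conj (χ l i) * χ l n)


-- helper: norm² of orthonormal combination
lemma norm_sq_comb {N : ℕ} {χ : Fin N → EuclideanSpace ℂ (Fin N)}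
    (hχ : Orthonormal ℂ χ) (c : Fin N → ℂ) :
    ‖∑ l, c l • χ l‖ ^ 2 = ∑ l, ‖c l‖ ^ 2 := by
  have h := hχ.inner_sum c c Finset.univ
  rw [← inner_self_eq_norm_sq (𝕜 := ℂ), h, map_sum]
  simp [RCLike.conj_mul, ← Complex.ofReal_pow]

-- gft as inner product
lemma gft_eq_inner {N : ℕ} (χ : Fin N → EuclideanSpace ℂ (Fin N))
    (f : EuclideanSpace ℂ (Fin N)) (l : Fin N) :
    gft χ f l = inner ℂ (χ l) f := by
  simp [gft, PiLp.inner_apply, mul_comm]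

lemma parseval {N : ℕ} {χ : Fin N → EuclideanSpace ℂ (Fin N)}
    (hχ : Orthonormal ℂ χ) (hspan : Submodule.span ℂ (Set.range χ) = ⊤)
    (f : EuclideanSpace ℂ (Fin N)) :
    ‖f‖ ^ 2 = ∑ l, ‖gft χ f l‖ ^ 2 := by
  set b : OrthonormalBasis (Fin N) ℂ (EuclideanSpace ℂ (Fin N)) :=
    OrthonormalBasis.mk hχ hspan.ge
  have hb : ∀ l, (b : Fin N → _) l = χ l := fun l => by simp [b, OrthonormalBasis.coe_mk]
  have hrep : f = ∑ l, gft χ f l • χ l := by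
    conv_lhs => rw [← b.sum_repr f]
    refine Finset.sum_congr rfl fun l _ => ?_
    rw [b.repr_apply_apply, hb, gft_eq_inner]
  calc ‖f‖ ^ 2 = ‖∑ l, gft χ f l • χ l‖ ^ 2 := by rw [← hrep]
    _ = _ := norm_sq_comb hχ _

theorem key {N : ℕ} (χ : Fin N → EuclideanSpace ℂ (Fin N)) (hχ : Orthonormal ℂ χ)
    (g f : EuclideanSpace ℂ (Fin N)) :
    ∑ i : Fin N, ‖∑ n, f n * conj (gtrans χ i g n)‖ ^ 2
      = N * ∑ l, ‖gft χ f l‖ ^ 2 * ‖gft χ g l‖ ^ 2 := by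
  set c : Fin N → ℂ := fun l => gft χ f l * conj (gft χ g l) with hc
  set v : EuclideanSpace ℂ (Fin N) := ∑ l, c l • χ l with hv
  have hgf : ∀ i, ∑ n, f n * conj (gtrans χ i g n)
      = (Real.sqrt N : ℂ) * ∑ l, c l * χ l i := by
    intro i
    have hconj : ∀ n, conj (gtrans χ i g n)
        = ((Real.sqrt N : ℝ) : ℂ) * ∑ l, conj (gft χ g l) * χ l i * conj (χ l n) := by
      intro n
      simp only [gtrans, PiLp.toLp_apply, map_mul, map_sum, Complex.conj_ofReal, Complex.conj_conj]
    calc ∑ n, f n * conj (gtrans χ i g n)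
        = ∑ n, ∑ l, ((Real.sqrt N : ℝ) : ℂ) * (f n * conj (χ l n) * (conj (gft χ g l) * χ l i)) := by
          refine Finset.sum_congr rfl fun n _ => ?_
          rw [hconj n, Finset.mul_sum, Finset.mul_sum]
          exact Finset.sum_congr rfl fun l _ => by ring
      _ = ∑ l, ∑ n, ((Real.sqrt N : ℝ) : ℂ) * (f n * conj (χ l n) * (conj (gft χ g l) * χ l i)) :=
          Finset.sum_comm
      _ = (Real.sqrt N : ℂ) * ∑ l, c l * χ l i := by
          rw [Finset.mul_sum]
          refine Finset.sum_congr rfl fun l _ => ?_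
          simp only [hc]
          rw [show gft χ f l = ∑ n, f n * conj (χ l n) from rfl]
          rw [Finset.sum_mul, Finset.sum_mul, Finset.mul_sum]
          exact Finset.sum_congr rfl fun n _ => by ring
  have happ : ∀ i, v i = ∑ l, c l * χ l i := by
    intro i
    rw [hv, WithLp.ofLp_sum]
    exact Finset.sum_apply i Finset.univ _
  have h1 : ∀ i, ‖∑ n, f n * conj (gtrans χ i g n)‖ ^ 2
      = (N : ℝ) * ‖v i‖ ^ 2 := by
    intro i
    rw [hgf i, ← happ i, norm_mul, mul_pow]
    congr 1
    rw [Complex.norm_of_nonneg (Real.sqrt_nonneg _),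
      Real.sq_sqrt (Nat.cast_nonneg N)]
  calc ∑ i : Fin N, ‖∑ n, f n * conj (gtrans χ i g n)‖ ^ 2
      = ∑ i : Fin N, (N : ℝ) * ‖v i‖ ^ 2 := Finset.sum_congr rfl fun i _ => h1 i
    _ = (N : ℝ) * ∑ i : Fin N, ‖v i‖ ^ 2 := by
        rw [← Finset.mul_sum]
    _ = (N : ℝ) * ‖v‖ ^ 2 := by
        rw [EuclideanSpace.norm_eq, Real.sq_sqrt (by positivity)]
    _ = (N : ℝ) * ∑ l, ‖c l‖ ^ 2 := by rw [hv, norm_sq_comb hχ]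
    _ = N * ∑ l, ‖gft χ f l‖ ^ 2 * ‖gft χ g l‖ ^ 2 := by
        congr 1
        exact Finset.sum_congr rfl fun l _ => by
          simp [hc, map_mul, mul_pow]

/-- `{T_i g : 1 ≤ i ≤ N}` is a frame for `ℂ^N` with frame bounds `A, B` iff
`√(A/N) ≤ |ĝ(l)| ≤ √(B/N)` for all `l`. -/
theorem translates_frame_iff {N : ℕ} (hN : 0 < N)
    (χ : Fin N → EuclideanSpace ℂ (Fin N)) (hχ : Orthonormal ℂ χ)
    (hspan : Submodule.span ℂ (Set.range χ) = ⊤)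
    (g : EuclideanSpace ℂ (Fin N)) (A B : ℝ) (hA : 0 < A) (hB : 0 < B) :
    (∀ f : EuclideanSpace ℂ (Fin N),
        A * ‖f‖ ^ 2 ≤ ∑ i : Fin N,
            ‖∑ n, f n * conj (gtrans χ i g n)‖ ^ 2 ∧
        ∑ i : Fin N,
            ‖∑ n, f n * conj (gtrans χ i g n)‖ ^ 2 ≤ B * ‖f‖ ^ 2) ↔
    (∀ l : Fin N,
        Real.sqrt (A / N) ≤ ‖gft χ g l‖ ∧
        ‖gft χ g l‖ ≤ Real.sqrt (B / N)) := by
  have hNpos : (0 : ℝ) < N := by exact_mod_cast hN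
  constructor
  · intro h l
    set x : ℝ := ‖gft χ g l‖ with hx
    have hx0 : 0 ≤ x := norm_nonneg _
    have hl := h (χ l)
    rw [key χ hχ g (χ l)] at hl
    have hnorm : ‖χ l‖ = 1 := hχ.1 l
    have hgftχ : ∀ l', gft χ (χ l) l' = if l' = l then 1 else 0 := by
      intro l'
      rw [gft_eq_inner]
      rw [orthonormal_iff_ite.mp hχ]
    have hsum : ∑ l', ‖gft χ (χ l) l'‖ ^ 2 * ‖gft χ g l'‖ ^ 2
        = x ^ 2 := by
      rw [Finset.sum_eq_single l]
      · simp [hgftχ, hx]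
      · intro b _ hb; simp [hgftχ, hb]
      · simp
    rw [hsum, hnorm] at hl
    simp only [one_pow, mul_one] at hl
    obtain ⟨h1, h2⟩ := hl
    have hAx : A / N ≤ x ^ 2 := by rw [div_le_iff₀ hNpos]; nlinarith
    have hxB : x ^ 2 ≤ B / N := by rw [le_div_iff₀ hNpos]; nlinarith
    constructor
    · have := Real.sqrt_le_sqrt hAx
      rwa [Real.sqrt_sq hx0] at this
    · have := Real.sqrt_le_sqrt hxB
      rwa [Real.sqrt_sq hx0] at this
  · intro h f
    rw [key χ hχ g f, parseval hχ hspan f]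
    have hAl : ∀ l, A / N ≤ ‖gft χ g l‖ ^ 2 := by
      intro l
      have h1 := (h l).1
      have h0 : 0 ≤ A / N := le_of_lt (by positivity)
      nlinarith [Real.sq_sqrt h0, Real.sqrt_nonneg (A / N), norm_nonneg (gft χ g l)]
    have hBl : ∀ l, ‖gft χ g l‖ ^ 2 ≤ B / N := by
      intro l
      have h2 := (h l).2
      have h0 : 0 ≤ B / N := le_of_lt (by positivity)
      nlinarith [Real.sq_sqrt h0, Real.sqrt_nonneg (B / N), norm_nonneg (gft χ g l)]
    constructor
    · have hs : ∑ l, A / N * ‖gft χ f l‖ ^ 2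
          ≤ ∑ l, ‖gft χ f l‖ ^ 2 * ‖gft χ g l‖ ^ 2 := by
        refine Finset.sum_le_sum fun l _ => ?_
        rw [mul_comm (‖gft χ f l‖ ^ 2)]
        exact mul_le_mul_of_nonneg_right (hAl l) (by positivity)
      calc A * ∑ l, ‖gft χ f l‖ ^ 2
          = (N : ℝ) * ∑ l, A / N * ‖gft χ f l‖ ^ 2 := by
            rw [← Finset.mul_sum, ← mul_assoc]
            field_simp
        _ ≤ (N : ℝ) * ∑ l, ‖gft χ f l‖ ^ 2 * ‖gft χ g l‖ ^ 2 :=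
            mul_le_mul_of_nonneg_left hs hNpos.le
    · have hs : ∑ l, ‖gft χ f l‖ ^ 2 * ‖gft χ g l‖ ^ 2
          ≤ ∑ l, B / N * ‖gft χ f l‖ ^ 2 := by
        refine Finset.sum_le_sum fun l _ => ?_
        rw [mul_comm (‖gft χ f l‖ ^ 2)]
        exact mul_le_mul_of_nonneg_right (hBl l) (by positivity)
      calc (N : ℝ) * ∑ l, ‖gft χ f l‖ ^ 2 * ‖gft χ g l‖ ^ 2
          ≤ (N : ℝ) * ∑ l, B / N * ‖gft χ f l‖ ^ 2 :=
            mul_le_mul_of_nonneg_left hs hNpos.le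
        _ = B * ∑ l, ‖gft χ f l‖ ^ 2 := by
            rw [← Finset.mul_sum, ← mul_assoc]
            field_simp
end

section
/- Let g ∈ ℂ^N be such that {T_i g : 1 ≤ i ≤ N} is a frame for ℂ^N (equivalently ĝ(l) ≠ 0 for all l), and let S f = Σ_{p=1}^N ⟨f, T_p g⟩ · T_p g be the associated frame operator. Then S is invertible, the canonical dual frame {S⁻¹(T_i g) : 1 ≤ i ≤ N} equals {T_i(S⁻¹ g) : 1 ≤ i ≤ N} (i.e. S⁻¹(T_i g) = T_i(S⁻¹ g) for every i), and the graph Fourier transform of S⁻¹ g is given by (S⁻¹ g)^(l) = ĝ(l)/(N·|ĝ(l)|²) = 1/(N·conj(ĝ(l))) for all 1 ≤ l ≤ N. -/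
open scoped ComplexConjugate BigOperators

section aux
variable {N : ℕ} {χ : Fin N → EuclideanSpace ℂ (Fin N)}

lemma horth (hχ : Orthonormal ℂ χ) (l m : Fin N) :
    (∑ n, χ l n * conj (χ m n)) = if l = m then 1 else 0 := by
  have h := orthonormal_iff_ite.mp hχ m l
  rw [PiLp.inner_apply] at h
  simp only [RCLike.inner_apply] at h
  calc (∑ n, χ l n * conj (χ m n)) = ∑ n, conj (χ m n) * χ l n := by
        simp [mul_comm]
    _ = if l = m then 1 else 0 := by
          rw [show (if l = m then (1:ℂ) else 0) = if m = l then 1 else 0 by simp [eq_comm], ← h]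
          exact Finset.sum_congr rfl fun n _ => mul_comm _ _

lemma gft_syn (hχ : Orthonormal ℂ χ) (c : Fin N → ℂ) (l : Fin N) :
    gft χ (WithLp.toLp 2 (fun n => ∑ m, c m * χ m n)) l = c l := by
  simp only [gft, PiLp.toLp_apply]
  calc (∑ n, (∑ m, c m * χ m n) * conj (χ l n))
      = ∑ n, ∑ m, c m * (χ m n * conj (χ l n)) := by
        simp [Finset.sum_mul, mul_assoc]
    _ = ∑ m, ∑ n, c m * (χ m n * conj (χ l n)) := Finset.sum_comm
    _ = ∑ m, c m * ∑ n, χ m n * conj (χ l n) := by simp [Finset.mul_sum]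
    _ = c l := by simp [horth hχ]

lemma syn_gft (hχ : Orthonormal ℂ χ)
    (hspan : Submodule.span ℂ (Set.range χ) = ⊤)
    (f : EuclideanSpace ℂ (Fin N)) (n : Fin N) :
    (∑ l, gft χ f l * χ l n) = f n := by
  let b : OrthonormalBasis (Fin N) ℂ (EuclideanSpace ℂ (Fin N)) :=
    OrthonormalBasis.mk hχ hspan.ge
  have hb : ∀ l, b l = χ l := fun l => by simp [b]
  have h := b.sum_repr' f
  have h2 : (∑ i, (inner ℂ (b i) f : ℂ) • b i) n = f n := by rw [h]
  rw [← h2]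
  have h3 : (∑ i, (inner ℂ (b i) f : ℂ) • b i) n
      = ∑ i, (inner ℂ (b i) f : ℂ) * b i n := by
    induction (Finset.univ : Finset (Fin N)) using Finset.induction with
    | empty => simp
    | insert _ _ hx ih =>
        rw [Finset.sum_insert hx, Finset.sum_insert hx, ← ih]
        rfl
  rw [h3]
  refine Finset.sum_congr rfl fun l _ => ?_
  rw [hb, PiLp.inner_apply]
  simp [gft, RCLike.inner_apply, mul_comm]

end aux

/-- If `{T_i g}` is a frame for `ℂ^N` (equivalently `ĝ(l) ≠ 0` for all `l`), then the
frame operator `S` is invertible, the canonical dual frame is `{T_i (S⁻¹ g)}`, and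
`(S⁻¹ g)^(l) = ĝ(l)/(N·|ĝ(l)|²) = 1/(N·conj(ĝ(l)))`. -/
theorem canonical_dual_frame_of_translates {N : ℕ} (hN : 0 < N)
    (χ : Fin N → EuclideanSpace ℂ (Fin N)) (hχ : Orthonormal ℂ χ)
    (hspan : Submodule.span ℂ (Set.range χ) = ⊤)
    (g : EuclideanSpace ℂ (Fin N))
    (hg : ∀ l : Fin N, gft χ g l ≠ 0)
    (S : EuclideanSpace ℂ (Fin N) → EuclideanSpace ℂ (Fin N))
    (hS : ∀ f : EuclideanSpace ℂ (Fin N), ∀ n : Fin N,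
        S f n = ∑ p : Fin N, (∑ n', f n' * conj (gtrans χ p g n')) * gtrans χ p g n) :
    ∃ Sinv : EuclideanSpace ℂ (Fin N) → EuclideanSpace ℂ (Fin N),
      (∀ f : EuclideanSpace ℂ (Fin N), S (Sinv f) = f ∧ Sinv (S f) = f) ∧
      (∀ i : Fin N, Sinv (gtrans χ i g) = gtrans χ i (Sinv g)) ∧
      (∀ l : Fin N,
        gft χ (Sinv g) l = gft χ g l / ((N : ℂ) * (‖gft χ g l‖ ^ 2 : ℝ)) ∧
        gft χ (Sinv g) l = 1 / ((N : ℂ) * conj (gft χ g l))) := by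
  set r : ℂ := (Real.sqrt N : ℂ) with hr
  have hrr : r * r = (N : ℂ) := by
    rw [hr, ← Complex.ofReal_mul, Real.mul_self_sqrt (Nat.cast_nonneg N)]
    norm_cast
  set d : Fin N → ℂ := fun l => (N : ℂ) * (conj (gft χ g l) * gft χ g l) with hd
  have hdne : ∀ l, d l ≠ 0 := by
    intro l
    simp only [hd]
    exact mul_ne_zero (Nat.cast_ne_zero.mpr hN.ne')
      (mul_ne_zero (by simpa using hg l) (hg l))
  -- gtrans as synthesis
  have hgt : ∀ (f : EuclideanSpace ℂ (Fin N)) (i : Fin N) (n : Fin N),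
      gtrans χ i f n = ∑ l, (r * gft χ f l * conj (χ l i)) * χ l n := by
    intro f i n
    simp only [gtrans, PiLp.toLp_apply, Finset.mul_sum]
    exact Finset.sum_congr rfl fun l _ => by ring
  have hgftgt : ∀ (f : EuclideanSpace ℂ (Fin N)) (i l : Fin N),
      gft χ (gtrans χ i f) l = r * gft χ f l * conj (χ l i) := by
    intro f i l
    have : gft χ (gtrans χ i f) l
        = gft χ (WithLp.toLp 2 (fun n => ∑ m, (r * gft χ f m * conj (χ m i)) * χ m n)) l := by
      rw [show gtrans χ i f = WithLp.toLp 2 (fun n => ∑ m, (r * gft χ f m * conj (χ m i)) * χ m n) by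
        ext n; rw [PiLp.toLp_apply]; exact hgt f i n]
    rw [this, gft_syn hχ]
  -- analysis coefficients
  have hA : ∀ (f : EuclideanSpace ℂ (Fin N)) (p : Fin N),
      (∑ n', f n' * conj (gtrans χ p g n'))
        = ∑ m, (r * conj (gft χ g m) * χ m p) * gft χ f m := by
    intro f p
    calc (∑ n', f n' * conj (gtrans χ p g n'))
        = ∑ n', ∑ m, (r * conj (gft χ g m) * χ m p) * (f n' * conj (χ m n')) := by
          refine Finset.sum_congr rfl fun n' _ => ?_
          rw [hgt g p n', map_sum, Finset.mul_sum]
          refine Finset.sum_congr rfl fun m _ => ?_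
          simp only [map_mul, hr, Complex.conj_ofReal, Complex.conj_conj]
          ring
      _ = ∑ m, (r * conj (gft χ g m) * χ m p) * gft χ f m := by
          rw [Finset.sum_comm]
          simp [gft, Finset.mul_sum]
  -- S in Fourier domain
  have hSF : ∀ (f : EuclideanSpace ℂ (Fin N)) (l : Fin N),
      gft χ (S f) l = d l * gft χ f l := by
    intro f l
    calc gft χ (S f) l
        = ∑ n, ∑ p, ((∑ n', f n' * conj (gtrans χ p g n')) * gtrans χ p g n)
            * conj (χ l n) := by
          simp only [gft, PiLp.toLp_apply]
          exact Finset.sum_congr rfl fun n _ => by rw [hS, Finset.sum_mul]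
      _ = ∑ p, (∑ n', f n' * conj (gtrans χ p g n')) * gft χ (gtrans χ p g) l := by
          rw [Finset.sum_comm]
          simp [gft, Finset.mul_sum, mul_assoc]
      _ = ∑ p, (∑ m, (r * conj (gft χ g m) * χ m p) * gft χ f m)
            * (r * gft χ g l * conj (χ l p)) := by
          exact Finset.sum_congr rfl fun p _ => by rw [hA, hgftgt]
      _ = ∑ m, ∑ p, ((r * conj (gft χ g m) * gft χ f m) * (r * gft χ g l))
            * (χ m p * conj (χ l p)) := by
          rw [Finset.sum_comm]
          refine Finset.sum_congr rfl fun p _ => ?_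
          rw [Finset.sum_mul]
          exact Finset.sum_congr rfl fun m _ => by ring
      _ = ∑ m, ((r * conj (gft χ g m) * gft χ f m) * (r * gft χ g l))
            * (if m = l then 1 else 0) := by
          refine Finset.sum_congr rfl fun m _ => ?_
          rw [← Finset.mul_sum, horth hχ]
      _ = d l * gft χ f l := by
          simp only [mul_ite, mul_one, mul_zero]
          rw [Finset.sum_ite_eq' Finset.univ l]
          simp only [Finset.mem_univ, if_true, hd]
          linear_combination (conj (gft χ g l) * gft χ g l * gft χ f l) * hrr
  -- the inverse
  set Sinv : EuclideanSpace ℂ (Fin N) → EuclideanSpace ℂ (Fin N) :=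
    fun f => WithLp.toLp 2 (fun n => ∑ l, (gft χ f l / d l) * χ l n) with hSinv
  have hSinvF : ∀ (f : EuclideanSpace ℂ (Fin N)) (l : Fin N),
      gft χ (Sinv f) l = gft χ f l / d l := by
    intro f l
    rw [hSinv]
    exact gft_syn hχ _ l
  have hSsyn : ∀ (f : EuclideanSpace ℂ (Fin N)) (n : Fin N),
      S f n = ∑ l, (d l * gft χ f l) * χ l n := by
    intro f n
    rw [← syn_gft hχ hspan (S f) n]
    exact Finset.sum_congr rfl fun l _ => by rw [hSF]
  refine ⟨Sinv, ?_, ?_, ?_⟩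
  · intro f
    constructor
    · ext n
      rw [hSsyn, ← syn_gft hχ hspan f n]
      refine Finset.sum_congr rfl fun l _ => ?_
      rw [hSinvF]
      field_simp
      rw [div_eq_iff (hdne l)]
      ring
    · ext n
      rw [hSinv]
      simp only [PiLp.toLp_apply]
      rw [← syn_gft hχ hspan f n]
      refine Finset.sum_congr rfl fun l _ => ?_
      rw [hSF]
      congr 1
      exact mul_div_cancel_left₀ _ (hdne l)
  · intro i
    ext n
    rw [hSinv]
    simp only [PiLp.toLp_apply]
    rw [hgt (Sinv g) i n]
    refine Finset.sum_congr rfl fun l _ => ?_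
    rw [hgftgt, hSinvF]
    field_simp
  · intro l
    have h1 : gft χ (Sinv g) l = gft χ g l / d l := hSinvF g l
    constructor
    · rw [h1, hd]
      simp only
      congr 2
      rw [Complex.sq_norm, Complex.normSq_eq_conj_mul_self]
    · rw [h1, hd]
      simp only
      rw [div_eq_div_iff (hdne l) (by
        exact mul_ne_zero (Nat.cast_ne_zero.mpr hN.ne') (by simpa using hg l))]
      · simp only [hd]
        ring
end
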